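/- Let w_k(f) := res L^k. Then modulo terms of total degree ≥ 2 in the variables fᵢ^{(j)} and modulo differential polynomials in the variables f_a^{(l)} with a ≤ k-3, one has w_k = Σ_{i=0}^{k-1} (k choose k-1-i) f_{k-i}^{(i)} + (k(k-1)/(1+δ_{k,3})) f₁ f_{k-2}, i.e. the linear part of w_k is Σ_{i=0}^{k-1} (k choose k-1-i) f_{k-i}^{(i)} and the coefficient of f₁f_{k-2} in w_k is k(k-1)/(1+δ_{k,3}) for k ≥ 3. -/

import Mathlib

/-- Generalized binomial coefficient `k(k-1)⋯(k-l+1)/l!` for `k : ℤ`, `l : ℕ`. -/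
def zchoose (k : ℤ) (l : ℕ) : ℤ :=
  if 0 ≤ k then (k.toNat).choose l else (-1) ^ l * ((l - 1 - k).toNat).choose l

/-- Composition of pseudo-differential operators `A = Σ aₙ ∂ⁿ`, `B = Σ bₙ ∂ⁿ` (given by
their coefficient functions `ℤ → R`, supported in degrees bounded above) over a
differential ring `(R, d)`, using the rule
`∂ᵏ ∘ a = Σ_{l≥0} (k(k-1)⋯(k-l+1)/l!) (dˡ a) ∂^{k-l}`. -/
noncomputable def pdoComp {R : Type*} [CommRing R] (d : R → R) (A B : ℤ → R) : ℤ → R :=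
  fun n => ∑ᶠ p : ℤ × ℕ, A p.1 * (zchoose p.1 p.2 • d^[p.2] (B (n + p.2 - p.1)))

/-- The formal adjoint `(Σ aₙ ∂ⁿ)† = Σ (-∂)ⁿ ∘ aₙ`. -/
noncomputable def pdoAdj {R : Type*} [CommRing R] (d : R → R) (A : ℤ → R) : ℤ → R :=
  fun m => ∑ᶠ l : ℕ, ((-1) ^ (m + l).natAbs : ℤ) •
    (zchoose (m + l) l • d^[l] (A (m + l)))

/-- The residue of a pseudo-differential operator: the coefficient of `∂^{-1}`. -/
def pdoRes {R : Type*} [CommRing R] (A : ℤ → R) : R := A (-1)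

/-- The differential polynomial ring `ℂ[f_i^{(j)}]` in the variables `f_i^{(j)}`,
`i ≥ 1`, `j ≥ 0` (indexed by pairs `(i,j)`). -/
noncomputable abbrev DPRing : Type := MvPolynomial (ℕ × ℕ) ℂ

/-- The variable `f_i^{(j)}`. -/
noncomputable def fv (i j : ℕ) : DPRing := MvPolynomial.X (i, j)

/-- The derivation `∂ₓ` with `∂ₓ f_i^{(j)} = f_i^{(j+1)}`. -/
noncomputable def Dx : Derivation ℂ DPRing DPRing :=
  MvPolynomial.mkDerivation ℂ (fun p : ℕ × ℕ => MvPolynomial.X (p.1, p.2 + 1))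

/-- The KP Lax operator `L = ∂ₓ + Σ_{i≥1} fᵢ ∂ₓ^{-i}` as a coefficient function. -/
noncomputable def Lop : ℤ → DPRing :=
  fun n => if n = 1 then 1 else if n ≤ -1 then fv (-n).toNat 0 else 0

/-- Powers of a pseudo-differential operator. -/
noncomputable def pdoPow {R : Type*} [CommRing R] (d : R → R) (A : ℤ → R) : ℕ → (ℤ → R)
  | 0 => fun n => if n = 0 then 1 else 0
  | k + 1 => pdoComp d A (pdoPow d A k)

/-- `L^k` as a pseudo-differential operator. -/
noncomputable def Lpow (k : ℕ) : ℤ → DPRing := pdoPow (⇑Dx) Lop k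

/-- The purely differential part `A₊` of a pseudo-differential operator. -/
def pdoPlus {R : Type*} [CommRing R] (A : ℤ → R) : ℤ → R :=
  fun n => if 0 ≤ n then A n else 0

/-- The commutator of two pseudo-differential operators. -/
noncomputable def pdoBracket {R : Type*} [CommRing R] (d : R → R) (A B : ℤ → R) : ℤ → R :=
  fun n => pdoComp d A B n - pdoComp d B A n

/-- `S_{i,2}`: the coefficient of `∂ₓ^{-i}` in `[(L²)₊, L]`, i.e. the second KP flow
`∂fᵢ/∂T₂`. -/
noncomputable def S2 (i : ℕ) : DPRing :=
  pdoBracket (⇑Dx) (pdoPlus (Lpow 2)) Lop (-(i : ℤ))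

/-- The total degree of a monomial (exponent function). -/
def mdeg (m : (ℕ × ℕ) →₀ ℕ) : ℕ := ∑ x ∈ m.support, m x


section KPaux

open MvPolynomial

lemma zchoose_zero' (k : ℤ) : zchoose k 0 = 1 := by
  unfold zchoose; split <;> simp

lemma zchoose_one_big (l : ℕ) (hl : 2 ≤ l) : zchoose 1 l = 0 := by
  unfold zchoose
  rw [if_pos (by norm_num)]
  norm_num [Nat.choose_eq_zero_of_lt (show 1 < l by omega)]

lemma Dx_iter_zero (l : ℕ) : (⇑Dx)^[l] (0 : DPRing) = 0 := by
  induction l with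
  | zero => rfl
  | succ l ih => rw [Function.iterate_succ_apply', ih, map_zero]

/-- weight of a monomial -/
def Wm (m : (ℕ × ℕ) →₀ ℕ) : ℕ := m.sum fun v e => e * (v.1 + v.2 + 1)

lemma Wm_add (a b : (ℕ × ℕ) →₀ ℕ) : Wm (a + b) = Wm a + Wm b :=
  Finsupp.sum_add_index' (by simp) (by intros; ring)

lemma Wm_single (v : ℕ × ℕ) (e : ℕ) : Wm (Finsupp.single v e) = e * (v.1 + v.2 + 1) :=
  Finsupp.sum_single_index (by simp)

lemma mdeg_eq_sum (m : (ℕ × ℕ) →₀ ℕ) : mdeg m = m.sum fun _ e => e := rfl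

lemma mdeg_add (a b : (ℕ × ℕ) →₀ ℕ) : mdeg (a + b) = mdeg a + mdeg b := by
  simp only [mdeg_eq_sum]
  exact Finsupp.sum_add_index' (by simp) (by intros; rfl)

lemma mdeg_single (v : ℕ × ℕ) (e : ℕ) : mdeg (Finsupp.single v e) = e := by
  simp only [mdeg_eq_sum]
  exact Finsupp.sum_single_index rfl

lemma fsub_eq_fsub_iff (a b c d : (ℕ × ℕ) →₀ ℕ) (hba : b ≤ a) (hdc : d ≤ c) :
    a - b = c - d ↔ a + d = c + b := by
  rw [Finsupp.le_def] at hba hdc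
  constructor <;> intro h <;> ext w <;>
    · have h1 := DFunLike.congr_fun h w
      have h2 := hba w
      have h3 := hdc w
      simp only [Finsupp.tsub_apply, Finsupp.add_apply] at h1 ⊢
      omega

lemma fsub_eq_iff (a b c : (ℕ × ℕ) →₀ ℕ) (hba : b ≤ a) :
    a - b = c ↔ a = c + b := by
  rw [Finsupp.le_def] at hba
  constructor <;> intro h <;> ext w <;>
    · have h1 := DFunLike.congr_fun h w
      have h2 := hba w
      simp only [Finsupp.tsub_apply, Finsupp.add_apply] at h1 ⊢
      omega

end KPaux
section KPaux2
open MvPolynomial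

lemma addsingle_eq_apply {m s : (ℕ × ℕ) →₀ ℕ} {v u : ℕ × ℕ}
    (h : m + Finsupp.single v 1 = s + Finsupp.single u 1) (w : ℕ × ℕ) :
    m w + (if v = w then 1 else 0) = s w + (if u = w then 1 else 0) := by
  have h1 := DFunLike.congr_fun h w
  rw [Finsupp.add_apply, Finsupp.add_apply, Finsupp.single_apply, Finsupp.single_apply] at h1
  exact h1

lemma sndne (v : ℕ × ℕ) : v ≠ (v.1, v.2 + 1) := by
  intro h; exact absurd (congrArg Prod.snd h) (by simp)

lemma coeff_Dx (P : DPRing) (m : (ℕ × ℕ) →₀ ℕ) :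
    coeff m (Dx P) =
      ∑ u ∈ m.support.filter (fun u => 1 ≤ u.2),
        ((m (u.1, u.2 - 1) + 1 : ℕ) : ℂ) *
          coeff (m + Finsupp.single (u.1, u.2 - 1) 1 - Finsupp.single u 1) P := by
  classical
  induction P using MvPolynomial.induction_on' with
  | add p q hp hq =>
    simp [map_add, hp, hq, Finset.sum_add_distrib, mul_add]
  | monomial s c =>
    have hDx : Dx (monomial s c) =
        c • s.sum fun v e => monomial (s - Finsupp.single v 1) (e : ℂ) •
          MvPolynomial.X (v.1, v.2 + 1) := by
      simp [Dx, MvPolynomial.mkDerivation_monomial]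
    have key : ∀ a : ℂ, ∀ v : ℕ × ℕ, v ∈ s.support →
        coeff m ((monomial (s - Finsupp.single v 1) a) * MvPolynomial.X (v.1, v.2 + 1))
        = if m + Finsupp.single v 1 = s + Finsupp.single (v.1, v.2 + 1) 1 then a else 0 := by
      intro a v hv
      rw [coeff_mul_X']
      have hsv : Finsupp.single v 1 ≤ s :=
        Finsupp.single_le_iff.mpr (by rw [Finsupp.mem_support_iff] at hv; omega)
      by_cases hC : m + Finsupp.single v 1 = s + Finsupp.single (v.1, v.2 + 1) 1
      · have hmemn : 1 ≤ m (v.1, v.2 + 1) := by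
          have h1 := addsingle_eq_apply hC (v.1, v.2 + 1)
          rw [if_neg (sndne v), if_pos rfl] at h1
          omega
        have hmem : (v.1, v.2 + 1) ∈ m.support := by
          rw [Finsupp.mem_support_iff]; omega
        rw [if_pos hmem, coeff_monomial, if_pos, if_pos hC]
        rw [fsub_eq_fsub_iff _ _ _ _ hsv (Finsupp.single_le_iff.mpr hmemn)]
        exact hC.symm
      · rw [if_neg hC]
        by_cases hmem : (v.1, v.2 + 1) ∈ m.support
        · rw [if_pos hmem, coeff_monomial, if_neg]
          intro hEq
          have hml : Finsupp.single (v.1, v.2 + 1) 1 ≤ m :=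
            Finsupp.single_le_iff.mpr
              (by rw [Finsupp.mem_support_iff] at hmem; omega)
          exact hC ((fsub_eq_fsub_iff _ _ _ _ hsv hml).mp hEq).symm
        · rw [if_neg hmem]
    rw [hDx, coeff_smul, smul_eq_mul, Finsupp.sum, coeff_sum]
    simp only [smul_eq_mul]
    rw [Finset.sum_congr rfl (fun v hv => key _ v hv)]
    have rhs_eq : ∀ u ∈ m.support.filter (fun u : ℕ × ℕ => 1 ≤ u.2),
        ((m (u.1, u.2 - 1) + 1 : ℕ) : ℂ) *
          coeff (m + Finsupp.single (u.1, u.2 - 1) 1 - Finsupp.single u 1) (monomial s c)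
        = (if m + Finsupp.single (u.1, u.2 - 1) 1 = s + Finsupp.single u 1
            then ((m (u.1, u.2 - 1) + 1 : ℕ) : ℂ) else 0) * c := by
      intro u hu
      rw [Finset.mem_filter, Finsupp.mem_support_iff] at hu
      rw [coeff_monomial]
      have hle : Finsupp.single u 1 ≤ m + Finsupp.single (u.1, u.2 - 1) 1 :=
        le_trans (Finsupp.single_le_iff.mpr (by omega)) le_self_add
      by_cases hC : m + Finsupp.single (u.1, u.2 - 1) 1 = s + Finsupp.single u 1
      · rw [if_pos hC, if_pos ((fsub_eq_iff _ _ _ hle).mpr hC).symm]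
      · rw [if_neg, if_neg hC, mul_zero, zero_mul]
        intro hEq; exact hC ((fsub_eq_iff _ _ _ hle).mp hEq.symm)
    rw [Finset.sum_congr rfl rhs_eq, ← Finset.sum_mul, mul_comm]
    congr 1
    rw [← Finset.sum_filter, ← Finset.sum_filter]
    refine Finset.sum_nbij' (i := fun v : ℕ × ℕ => (v.1, v.2 + 1))
      (j := fun u : ℕ × ℕ => (u.1, u.2 - 1)) ?_ ?_ ?_ ?_ ?_
    · intro v hv
      rw [Finset.mem_filter] at hv
      obtain ⟨hv, hC⟩ := hv
      have h1 := addsingle_eq_apply hC (v.1, v.2 + 1)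
      rw [if_neg (sndne v), if_pos rfl] at h1
      simp only [Finset.mem_filter, Finsupp.mem_support_iff, Nat.add_sub_cancel]
      exact ⟨⟨by omega, by omega⟩, hC⟩
    · intro u hu
      simp only [Finset.mem_filter, Finsupp.mem_support_iff] at hu
      obtain ⟨⟨hm, h2⟩, hC⟩ := hu
      have hud : (u.1, u.2 - 1) ≠ u := by
        intro h; have := congrArg Prod.snd h; simp only at this; omega
      have hup : (u.1, u.2 - 1 + 1) = u := by
        rw [Prod.ext_iff]; exact ⟨rfl, by omega⟩
      have h1 := addsingle_eq_apply hC (u.1, u.2 - 1)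
      rw [if_pos rfl, if_neg (by intro h; exact hud (h.symm))] at h1
      simp only [Finset.mem_filter, Finsupp.mem_support_iff]
      refine ⟨by omega, ?_⟩
      rw [hup]; exact hC
    · intro v _; dsimp only; rw [Prod.ext_iff]; exact ⟨rfl, by omega⟩
    · intro u hu
      simp only [Finset.mem_filter, Finsupp.mem_support_iff] at hu
      dsimp only; rw [Prod.ext_iff]; exact ⟨rfl, by omega⟩
    · intro v hv
      rw [Finset.mem_filter] at hv
      obtain ⟨hv, hC⟩ := hv
      have h1 := addsingle_eq_apply hC v
      rw [if_pos rfl, if_neg (fun h => sndne v h.symm)] at h1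
      dsimp only
      rw [Nat.add_sub_cancel, Prod.mk.eta]
      congr 1
      omega

end KPaux2
section KPaux3
open MvPolynomial

lemma coeff_Dx_zero_snd {m : (ℕ × ℕ) →₀ ℕ} (hm : ∀ u ∈ m.support, u.2 = 0) (P : DPRing) :
    coeff m (Dx P) = 0 := by
  rw [coeff_Dx]
  have : m.support.filter (fun u => 1 ≤ u.2) = ∅ := by
    rw [Finset.filter_eq_empty_iff]
    intro u hu
    have := hm u hu; omega
  rw [this, Finset.sum_empty]

lemma coeff_Dx_iter_zero_snd {m : (ℕ × ℕ) →₀ ℕ} (hm : ∀ u ∈ m.support, u.2 = 0)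
    (P : DPRing) {l : ℕ} (hl : 1 ≤ l) :
    coeff m ((⇑Dx)^[l] P) = 0 := by
  obtain ⟨l', rfl⟩ : ∃ l', l = l' + 1 := ⟨l - 1, by omega⟩
  rw [Function.iterate_succ_apply']
  exact coeff_Dx_zero_snd hm _

lemma coeff_Dx_single (i l : ℕ) (P : DPRing) :
    coeff (Finsupp.single (i, l + 1) 1) (Dx P) = coeff (Finsupp.single (i, l) 1) P := by
  rw [coeff_Dx]
  rw [Finsupp.support_single_ne_zero _ (by norm_num)]
  have : ({(i, l + 1)} : Finset (ℕ × ℕ)).filter (fun u => 1 ≤ u.2) = {(i, l + 1)} := by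
    rw [Finset.filter_eq_self]; intro u hu; rw [Finset.mem_singleton] at hu; subst hu; omega
  rw [this, Finset.sum_singleton]
  have h0 : (Finsupp.single (i, l + 1) 1 : (ℕ × ℕ) →₀ ℕ) ((i, l + 1).1, (i, l + 1).2 - 1) = 0 := by
    rw [Finsupp.single_apply, if_neg]
    intro h; have := congrArg Prod.snd h; simp only at this; omega
  dsimp only at h0 ⊢
  rw [Nat.add_sub_cancel] at h0 ⊢
  rw [h0]
  have harg : Finsupp.single (i, l + 1) 1 + Finsupp.single (i, l) 1 - Finsupp.single (i, l + 1) 1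
      = (Finsupp.single (i, l) 1 : (ℕ × ℕ) →₀ ℕ) := by
    rw [add_comm, add_tsub_cancel_right]
  rw [harg]
  norm_num

/-- the homogeneity predicate -/
def GoodZ (w : ℤ) (P : DPRing) : Prop :=
  ∀ m, MvPolynomial.coeff m P ≠ 0 → (Wm m : ℤ) = w ∧ ∀ v ∈ m.support, 1 ≤ v.1

lemma GoodZ_zero (w : ℤ) : GoodZ w 0 := by intro m hm; simp [coeff_zero] at hm

lemma GoodZ_Dx {w : ℤ} {P : DPRing} (hP : GoodZ w P) : GoodZ (w + 1) (Dx P) := by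
  intro m hm
  rw [coeff_Dx] at hm
  obtain ⟨u, hu, hne⟩ := Finset.exists_ne_zero_of_sum_ne_zero hm
  rw [Finset.mem_filter, Finsupp.mem_support_iff] at hu
  obtain ⟨hmu, h2⟩ := hu
  have hcoeff : coeff (m + Finsupp.single (u.1, u.2 - 1) 1 - Finsupp.single u 1) P ≠ 0 := by
    intro h; rw [h, mul_zero] at hne; exact hne rfl
  set s := m + Finsupp.single (u.1, u.2 - 1) 1 - Finsupp.single u 1 with hs
  obtain ⟨hW, hvars⟩ := hP s hcoeff
  have hle : Finsupp.single u 1 ≤ m + Finsupp.single (u.1, u.2 - 1) 1 :=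
    le_trans (Finsupp.single_le_iff.mpr (by omega)) le_self_add
  have hkey : s + Finsupp.single u 1 = m + Finsupp.single (u.1, u.2 - 1) 1 :=
    tsub_add_cancel_of_le hle
  have hWm : Wm s + Wm (Finsupp.single u 1) = Wm m + Wm (Finsupp.single (u.1, u.2 - 1) 1) := by
    rw [← Wm_add, ← Wm_add, hkey]
  rw [Wm_single, Wm_single] at hWm
  dsimp only at hWm
  constructor
  · have : Wm m = Wm s + 1 := by omega
    rw [this]; push_cast; omega
  · intro v hv
    rw [Finsupp.mem_support_iff] at hv
    by_cases hvu : v = u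
    · have hsu : (u.1, u.2 - 1) ∈ s.support := by
        rw [Finsupp.mem_support_iff]
        have := DFunLike.congr_fun hkey (u.1, u.2 - 1)
        rw [Finsupp.add_apply, Finsupp.add_apply, Finsupp.single_apply, Finsupp.single_apply,
          if_pos rfl, if_neg (by intro h; have := congrArg Prod.snd h; simp only at this; omega)]
          at this
        omega
      have := hvars _ hsu
      subst hvu; exact this
    · have : s v ≠ 0 := by
        have := DFunLike.congr_fun hkey v
        rw [Finsupp.add_apply, Finsupp.add_apply, Finsupp.single_apply, Finsupp.single_apply,
          if_neg (by intro h; exact hvu h.symm)] at this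
        split_ifs at this <;> omega
      exact hvars v (Finsupp.mem_support_iff.mpr this)

lemma GoodZ_Dx_iter {w : ℤ} {P : DPRing} (hP : GoodZ w P) (l : ℕ) :
    GoodZ (w + l) ((⇑Dx)^[l] P) := by
  induction l with
  | zero => simpa using hP
  | succ l ih =>
    rw [Function.iterate_succ_apply']
    have h2 := GoodZ_Dx ih
    have : w + ((l : ℤ) + 1) = w + l + 1 := by ring
    rw [show ((l + 1 : ℕ) : ℤ) = (l : ℤ) + 1 from by push_cast; ring, this]
    exact h2

lemma GoodZ_fv_mul {w : ℤ} {P : DPRing} (hP : GoodZ w P) (i : ℕ) (hi : 1 ≤ i) :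
    GoodZ (w + i + 1) (fv i 0 * P) := by
  classical
  intro m hm
  rw [fv, coeff_X_mul'] at hm
  split_ifs at hm with hmem
  · have hle : Finsupp.single (i, 0) 1 ≤ m := by
      rw [Finsupp.mem_support_iff] at hmem
      exact Finsupp.single_le_iff.mpr (by omega)
    obtain ⟨hW, hvars⟩ := hP _ hm
    have hkey : m - Finsupp.single (i, 0) 1 + Finsupp.single (i, 0) 1 = m :=
      tsub_add_cancel_of_le hle
    constructor
    · have : Wm (m - Finsupp.single (i, 0) 1) + Wm (Finsupp.single (i, 0) 1) = Wm m := by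
        rw [← Wm_add, hkey]
      rw [Wm_single] at this
      dsimp only at this
      have h2 : Wm m = Wm (m - Finsupp.single (i, 0) 1) + (i + 1) := by omega
      rw [h2]; push_cast; omega
    · intro v hv
      rw [Finsupp.mem_support_iff] at hv
      by_cases hvi : v = (i, 0)
      · subst hvi; exact hi
      · refine hvars v (Finsupp.mem_support_iff.mpr ?_)
        have := DFunLike.congr_fun hkey v
        rw [Finsupp.add_apply, Finsupp.single_apply, if_neg (by intro h; exact hvi h.symm)] at this
        omega
  · exact absurd rfl hm

end KPaux3
section KPaux4
open MvPolynomial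

lemma zchoose_one_one : zchoose 1 1 = 1 := by unfold zchoose; norm_num

lemma Lop_one : Lop 1 = 1 := by unfold Lop; norm_num

lemma Lop_neg (i : ℕ) (hi : 1 ≤ i) : Lop (-(i : ℤ)) = fv i 0 := by
  unfold Lop
  rw [if_neg (by omega), if_pos (by omega)]
  congr 1
  omega

lemma Lop_other (z : ℤ) (h1 : z ≠ 1) (h2 : ¬ z ≤ -1) : Lop z = 0 := by
  unfold Lop; rw [if_neg h1, if_neg h2]

lemma pdoComp_Lop_eval (B : ℤ → DPRing) (N : ℤ) (hB : ∀ m : ℤ, N < m → B m = 0) (n : ℤ) :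
    pdoComp (⇑Dx) Lop B n = B (n - 1) + Dx (B n) +
      ∑ p ∈ Finset.Icc 1 (N - n).toNat ×ˢ Finset.range (N - n).toNat,
        zchoose (-(p.1 : ℤ)) p.2 • (fv p.1 0 * (⇑Dx)^[p.2] (B (n + p.2 + p.1))) := by
  classical
  set M := (N - n).toNat with hM
  set F : ℤ × ℕ → DPRing :=
    fun p => Lop p.1 * (zchoose p.1 p.2 • (⇑Dx)^[p.2] (B (n + p.2 - p.1))) with hF
  set e : ℕ × ℕ → ℤ × ℕ := fun q => (-(q.1 : ℤ), q.2) with he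
  set T : Finset (ℤ × ℕ) :=
    insert (1, 0) (insert (1, 1) ((Finset.Icc 1 M ×ˢ Finset.range M).image e)) with hT
  have himage : ∀ z : ℤ × ℕ, z ∈ (Finset.Icc 1 M ×ˢ Finset.range M).image e →
      z.1 ≤ -1 := by
    intro z hz
    obtain ⟨q, hq, hqe⟩ := Finset.mem_image.mp hz
    rw [Finset.mem_product, Finset.mem_Icc] at hq
    have := congrArg Prod.fst hqe
    change -(q.1 : ℤ) = z.1 at this
    omega
  have hsupp : Function.support F ⊆ ↑T := by
    intro p hp
    rw [Function.mem_support] at hp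
    by_cases hp1 : p.1 = 1
    · have hz : zchoose p.1 p.2 ≠ 0 := by
        intro h
        exact hp (by rw [hF]; dsimp only; rw [h, zero_smul, mul_zero])
      have hp2 : p.2 ≤ 1 := by
        by_contra hcon
        exact hz (hp1 ▸ zchoose_one_big p.2 (by omega))
      rw [hT]
      rcases Nat.le_one_iff_eq_zero_or_eq_one.mp hp2 with h | h
      · exact Finset.mem_insert.mpr (Or.inl (by rw [← hp1, ← h]))
      · refine Finset.mem_insert.mpr (Or.inr (Finset.mem_insert.mpr (Or.inl ?_)))
        rw [← hp1, ← h]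
    · by_cases hp2 : p.1 ≤ -1
      · have hBne : B (n + p.2 - p.1) ≠ 0 := by
          intro h
          exact hp (by rw [hF]; dsimp only; rw [h, Dx_iter_zero, smul_zero, mul_zero])
        have hle : n + p.2 - p.1 ≤ N := by
          by_contra hcon; exact hBne (hB _ (by omega))
        rw [hT]
        refine Finset.mem_insert.mpr (Or.inr (Finset.mem_insert.mpr (Or.inr ?_)))
        refine Finset.mem_image.mpr ⟨((-p.1).toNat, p.2), ?_, ?_⟩
        · rw [Finset.mem_product, Finset.mem_Icc, Finset.mem_range]
          constructor
          · constructor <;> omega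
          · omega
        · rw [he]; dsimp only
          rw [Prod.ext_iff]; constructor
          · dsimp only; omega
          · rfl
      · exact absurd (by rw [hF]; dsimp only; rw [Lop_other p.1 hp1 hp2, zero_mul]) hp
  have h10 : ((1 : ℤ), (0 : ℕ)) ∉
      insert ((1 : ℤ), (1 : ℕ)) ((Finset.Icc 1 M ×ˢ Finset.range M).image e) := by
    intro h
    rcases Finset.mem_insert.mp h with h | h
    · rw [Prod.ext_iff] at h; exact absurd h.2 (by norm_num)
    · have := himage _ h; norm_num at this
  have h11 : ((1 : ℤ), (1 : ℕ)) ∉ (Finset.Icc 1 M ×ˢ Finset.range M).image e := by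
    intro h
    have := himage _ h; norm_num at this
  have hstep : pdoComp (⇑Dx) Lop B n = ∑ p ∈ T, F p :=
    finsum_eq_sum_of_support_subset F hsupp
  rw [hstep, hT, Finset.sum_insert h10, Finset.sum_insert h11, Finset.sum_image ?hinj]
  case hinj =>
    intro x _ y _ hxy
    rw [he, Prod.ext_iff] at hxy
    dsimp only at hxy
    rw [Prod.ext_iff]
    omega
  have hF10 : F (1, 0) = B (n - 1) := by
    rw [hF]; dsimp only
    rw [Lop_one, zchoose_zero', one_smul, one_mul, Function.iterate_zero_apply]
    norm_num
  have hF11 : F (1, 1) = Dx (B n) := by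
    rw [hF]; dsimp only
    rw [Lop_one, zchoose_one_one, one_smul, one_mul, Function.iterate_one]
    norm_num
  rw [hF10, hF11, ← add_assoc]
  congr 1
  refine Finset.sum_congr rfl ?_
  intro q hq
  rw [Finset.mem_product, Finset.mem_Icc] at hq
  rw [hF, he]; dsimp only
  rw [Lop_neg q.1 hq.1.1, mul_smul_comm]
  have : n + (q.2 : ℤ) - -(q.1 : ℤ) = n + q.2 + q.1 := by ring
  rw [this]

lemma Lpow_zero_eval (n : ℤ) : Lpow 0 n = if n = 0 then 1 else 0 := rfl

lemma Lpow_bound : ∀ k : ℕ, ∀ n : ℤ, (k : ℤ) < n → Lpow k n = 0 := by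
  intro k
  induction k with
  | zero =>
    intro n hn
    rw [Lpow_zero_eval, if_neg (by omega)]
  | succ k ih =>
    intro n hn
    have hrfl : Lpow (k + 1) n = pdoComp (⇑Dx) Lop (Lpow k) n := rfl
    rw [hrfl, pdoComp_Lop_eval (Lpow k) k (fun m hm => ih m hm) n]
    have hM : ((k : ℤ) - n).toNat = 0 := by omega
    rw [hM, ih (n - 1) (by omega), ih n (by omega), map_zero]
    simp

lemma Lpow_succ (k : ℕ) (n : ℤ) :
    Lpow (k + 1) n = Lpow k (n - 1) + Dx (Lpow k n) +
      ∑ p ∈ Finset.Icc 1 ((k : ℤ) - n).toNat ×ˢ Finset.range ((k : ℤ) - n).toNat,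
        zchoose (-(p.1 : ℤ)) p.2 • (fv p.1 0 * (⇑Dx)^[p.2] (Lpow k (n + p.2 + p.1))) :=
  pdoComp_Lop_eval (Lpow k) k (Lpow_bound k) n

end KPaux4
section KPaux5
open MvPolynomial

/-- index set for the sum in `Lpow_succ` -/
noncomputable def Sset (k : ℕ) (n : ℤ) : Finset (ℕ × ℕ) :=
  Finset.Icc 1 ((k : ℤ) - n).toNat ×ˢ Finset.range ((k : ℤ) - n).toNat

lemma coeff_Lpow_succ (k : ℕ) (n : ℤ) (m : (ℕ × ℕ) →₀ ℕ) :
    coeff m (Lpow (k + 1) n) = coeff m (Lpow k (n - 1)) + coeff m (Dx (Lpow k n)) +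
      ∑ p ∈ Sset k n,
        zchoose (-(p.1 : ℤ)) p.2 • coeff m (fv p.1 0 * (⇑Dx)^[p.2] (Lpow k (n + p.2 + p.1))) := by
  rw [Lpow_succ, coeff_add, coeff_add, coeff_sum, Sset]
  simp only [coeff_smul]

lemma mem_Sset {k : ℕ} {n : ℤ} {p : ℕ × ℕ} (hp : p ∈ Sset k n) :
    1 ≤ p.1 ∧ (p.1 : ℤ) ≤ (k : ℤ) - n ∧ (p.2 : ℤ) < (k : ℤ) - n := by
  rw [Sset, Finset.mem_product, Finset.mem_Icc, Finset.mem_range] at hp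
  omega

lemma Lpow_const : ∀ k : ℕ, ∀ n : ℤ, coeff 0 (Lpow k n) = if n = (k : ℤ) then 1 else 0 := by
  intro k
  induction k with
  | zero =>
    intro n
    rw [Lpow_zero_eval]
    by_cases h : n = 0
    · rw [if_pos h, if_pos (by rw [h]; norm_num)]
      exact MvPolynomial.coeff_zero_one
    · rw [if_neg h, if_neg (by push_cast; exact h), coeff_zero]
  | succ k ih =>
    intro n
    rw [coeff_Lpow_succ, ih,
      coeff_Dx_zero_snd (by intro u hu; simp at hu) _]
    have hsum : ∀ p ∈ Sset k n,
        zchoose (-(p.1 : ℤ)) p.2 •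
          coeff 0 (fv p.1 0 * (⇑Dx)^[p.2] (Lpow k (n + p.2 + p.1))) = 0 := by
      intro p _
      rw [fv, coeff_X_mul', if_neg (by simp), smul_zero]
    rw [Finset.sum_congr rfl hsum, Finset.sum_const_zero, add_zero, add_zero]
    have hiff : (n - 1 = (k : ℤ)) ↔ (n = (((k : ℕ) + 1 : ℕ) : ℤ)) := by push_cast; omega
    by_cases h1 : n - 1 = (k : ℤ)
    · rw [if_pos h1, if_pos (hiff.mp h1)]
    · rw [if_neg h1, if_neg (fun h => h1 (hiff.mpr h))]

lemma coeff_single_of_const (m : (ℕ × ℕ) →₀ ℕ) (hm : m ≠ 0) (n : ℤ) :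
    coeff m (if n = 0 then (1 : DPRing) else 0) = 0 := by
  split_ifs
  · rw [MvPolynomial.coeff_one, if_neg (by intro h; exact hm h.symm)]
  · exact coeff_zero m

lemma single_support (i l : ℕ) :
    (Finsupp.single ((i : ℕ), l) (1 : ℕ)).support = {(i, l)} :=
  Finsupp.support_single_ne_zero _ one_ne_zero

lemma Lpow_lin0 : ∀ k : ℕ, ∀ n : ℤ, ∀ l : ℕ,
    coeff (Finsupp.single (0, l) 1) (Lpow k n) = 0 := by
  intro k
  induction k with
  | zero =>
    intro n l
    rw [Lpow_zero_eval]
    exact coeff_single_of_const _ (by simp) n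
  | succ k ih =>
    intro n l
    rw [coeff_Lpow_succ, ih]
    have hB : coeff (Finsupp.single (0, l) 1) (Dx (Lpow k n)) = 0 := by
      cases l with
      | zero =>
        refine coeff_Dx_zero_snd ?_ _
        intro u hu
        rw [single_support, Finset.mem_singleton] at hu
        rw [hu]
      | succ l' => rw [coeff_Dx_single, ih]
    rw [hB]
    have hsum : ∀ p ∈ Sset k n,
        zchoose (-(p.1 : ℤ)) p.2 •
          coeff (Finsupp.single (0, l) 1) (fv p.1 0 * (⇑Dx)^[p.2] (Lpow k (n + p.2 + p.1))) = 0 := by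
      intro p hp
      have h1 := (mem_Sset hp).1
      rw [fv, coeff_X_mul', if_neg, smul_zero]
      rw [single_support, Finset.mem_singleton]
      intro h
      have := congrArg Prod.fst h
      dsimp only at this
      omega
    rw [Finset.sum_congr rfl hsum, Finset.sum_const_zero]
    ring

lemma lin_sum_eval (k : ℕ) (n : ℤ) (i l : ℕ) (hi : 1 ≤ i) :
    ∑ p ∈ Sset k n, zchoose (-(p.1 : ℤ)) p.2 •
      coeff (Finsupp.single (i, l) 1) (fv p.1 0 * (⇑Dx)^[p.2] (Lpow k (n + p.2 + p.1)))
    = if l = 0 ∧ (i : ℤ) = (k : ℤ) - n then 1 else 0 := by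
  by_cases hQ : l = 0 ∧ (i : ℤ) = (k : ℤ) - n
  · obtain ⟨hl, hik⟩ := hQ
    rw [if_pos ⟨hl, hik⟩]
    have hmem : ((i : ℕ), (0 : ℕ)) ∈ Sset k n := by
      rw [Sset, Finset.mem_product, Finset.mem_Icc, Finset.mem_range]
      exact ⟨⟨hi, by omega⟩, by dsimp only; omega⟩
    rw [Finset.sum_eq_single_of_mem _ hmem]
    · dsimp only
      rw [fv, coeff_X_mul',
        if_pos (by rw [single_support, Finset.mem_singleton, hl]),
        hl, tsub_self, Function.iterate_zero_apply, Lpow_const,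
        if_pos (by push_cast; omega), zchoose_zero', one_smul]
    · intro p hp hne
      obtain ⟨p1, p2⟩ := p
      dsimp only
      by_cases hpi : ((p1 : ℕ), (0 : ℕ)) = ((i : ℕ), l)
      · have hp1 : p1 = i := (Prod.ext_iff.mp hpi).1
        have hp2 : p2 ≠ 0 := by
          intro h
          exact hne (by rw [hp1, h])
        rw [fv, coeff_X_mul',
          if_pos (by rw [single_support, Finset.mem_singleton]; exact hpi),
          show Finsupp.single ((i : ℕ), l) 1 - Finsupp.single (p1, 0) 1 = 0 by
            rw [hp1, hl, tsub_self],
          coeff_Dx_iter_zero_snd (by simp) _ (by omega), smul_zero]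
      · rw [fv, coeff_X_mul',
          if_neg (by rw [single_support, Finset.mem_singleton]; exact hpi),
          smul_zero]
  · rw [if_neg hQ]
    refine Finset.sum_eq_zero ?_
    intro p hp
    obtain ⟨p1, p2⟩ := p
    dsimp only
    by_cases hpi : ((p1 : ℕ), (0 : ℕ)) = ((i : ℕ), l)
    · have hp1 : p1 = i := (Prod.ext_iff.mp hpi).1
      have hl0 : l = 0 := ((Prod.ext_iff.mp hpi).2).symm
      have hzero : Finsupp.single ((i : ℕ), l) 1 - Finsupp.single (p1, 0) 1 = 0 := by
        rw [hp1, hl0, tsub_self]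
      rw [fv, coeff_X_mul',
        if_pos (by rw [single_support, Finset.mem_singleton]; exact hpi), hzero]
      cases p2 with
      | zero =>
        rw [Function.iterate_zero_apply, Lpow_const, if_neg, smul_zero]
        intro h
        refine hQ ⟨hl0, ?_⟩
        rw [hp1] at h
        push_cast at h
        omega
      | succ p2' =>
        rw [coeff_Dx_iter_zero_snd (by simp) _ (by omega), smul_zero]
    · rw [fv, coeff_X_mul',
        if_neg (by rw [single_support, Finset.mem_singleton]; exact hpi),
        smul_zero]

lemma Lpow_lin : ∀ k : ℕ, ∀ n : ℤ, ∀ i l : ℕ, 1 ≤ i →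
    coeff (Finsupp.single (i, l) 1) (Lpow k n) =
      if (i : ℤ) + l + 1 = (k : ℤ) - n then (k.choose (l + 1) : ℂ) else 0 := by
  intro k
  induction k with
  | zero =>
    intro n i l _
    rw [Lpow_zero_eval, coeff_single_of_const _ (by simp) n]
    simp [Nat.choose_zero_succ]
  | succ k ih =>
    intro n i l hi
    rw [coeff_Lpow_succ, ih _ _ _ hi, lin_sum_eval k n i l hi]
    have hB : coeff (Finsupp.single (i, l) 1) (Dx (Lpow k n)) =
        if 1 ≤ l ∧ (i : ℤ) + l + 1 = (k : ℤ) - n + 1 then (k.choose l : ℂ) else 0 := by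
      cases l with
      | zero =>
        rw [coeff_Dx_zero_snd ?_ _, if_neg (by rintro ⟨h1, -⟩; exact absurd h1 (by norm_num))]
        intro u hu
        rw [single_support, Finset.mem_singleton] at hu
        rw [hu]
      | succ l' =>
        rw [coeff_Dx_single, ih _ _ _ hi]
        have hiff : ((i : ℤ) + (l' : ℕ) + 1 = (k : ℤ) - n) ↔
            (1 ≤ l' + 1 ∧ (i : ℤ) + ((l' + 1 : ℕ) : ℤ) + 1 = (k : ℤ) - n + 1) := by
          omega
        by_cases h1 : (i : ℤ) + (l' : ℕ) + 1 = (k : ℤ) - n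
        · rw [if_pos h1, if_pos (hiff.mp h1)]
        · rw [if_neg h1, if_neg (fun h => h1 (hiff.mpr h))]
    rw [hB]
    split_ifs <;>
      first
        | (exfalso; omega)
        | ring1
        | (rw [Nat.choose_succ_succ k l]; push_cast; ring1)
        | (obtain rfl : l = 0 := by omega;
           rw [Nat.choose_succ_succ k 0]
           push_cast [Nat.choose_zero_right, Nat.choose_one_right]; ring1)

end KPaux5
section KPaux6
open MvPolynomial

lemma Lpow_good : ∀ k : ℕ, ∀ n : ℤ, GoodZ ((k : ℤ) - n) (Lpow k n) := by
  intro k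
  induction k with
  | zero =>
    intro n
    rw [Lpow_zero_eval]
    by_cases h : n = 0
    · rw [if_pos h, h]
      intro m hm
      rw [MvPolynomial.coeff_one] at hm
      have hm0 : m = 0 := by
        by_contra hc
        rw [if_neg (fun h => hc h.symm)] at hm
        exact hm rfl
      subst hm0
      constructor
      · simp [Wm]
      · intro v hv; simp at hv
    · rw [if_neg h]
      exact GoodZ_zero _
  | succ k ih =>
    intro n m hm
    rw [coeff_Lpow_succ] at hm
    by_cases hA : coeff m (Lpow k (n - 1)) ≠ 0
    · obtain ⟨hW, hv⟩ := ih (n - 1) m hA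
      refine ⟨by push_cast at hW ⊢; omega, hv⟩
    by_cases hB : coeff m (Dx (Lpow k n)) ≠ 0
    · obtain ⟨hW, hv⟩ := GoodZ_Dx (ih n) m hB
      refine ⟨by push_cast at hW ⊢; omega, hv⟩
    push_neg at hA hB
    rw [hA, hB, zero_add, zero_add] at hm
    obtain ⟨p, hp, hne⟩ := Finset.exists_ne_zero_of_sum_ne_zero hm
    obtain ⟨hp1, -, -⟩ := mem_Sset hp
    have hcoeff : coeff m (fv p.1 0 * (⇑Dx)^[p.2] (Lpow k (n + p.2 + p.1))) ≠ 0 := by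
      intro h; rw [h, smul_zero] at hne; exact hne rfl
    have hgood := GoodZ_fv_mul (GoodZ_Dx_iter (ih (n + p.2 + p.1)) p.2) p.1 hp1
    obtain ⟨hW, hv⟩ := hgood m hcoeff
    refine ⟨by push_cast at hW ⊢; omega, hv⟩

/-- the quadratic monomial `f₁ f_c` -/
noncomputable def qmon (c : ℕ) : (ℕ × ℕ) →₀ ℕ :=
  Finsupp.single (1, 0) 1 + Finsupp.single (c, 0) 1

lemma qmon_apply (c : ℕ) (w : ℕ × ℕ) :
    qmon c w = (if (1, 0) = w then 1 else 0) + (if (c, 0) = w then 1 else 0) := by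
  rw [qmon, Finsupp.add_apply, Finsupp.single_apply, Finsupp.single_apply]

lemma qmon_support_snd (c : ℕ) : ∀ u ∈ (qmon c).support, u.2 = 0 := by
  intro u hu
  rw [Finsupp.mem_support_iff, qmon_apply] at hu
  split_ifs at hu with h1 h2 h2 <;>
    first
      | (exact (congrArg Prod.snd h1).symm)
      | (exact (congrArg Prod.snd h2).symm)
      | exact absurd rfl hu

lemma qmon_sub_one (c : ℕ) :
    qmon c - Finsupp.single (1, 0) 1 = Finsupp.single (c, 0) 1 := by
  rw [qmon, add_comm, add_tsub_cancel_right]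

lemma qmon_sub_c (c : ℕ) :
    qmon c - Finsupp.single (c, 0) 1 = Finsupp.single (1, 0) 1 := by
  rw [qmon, add_tsub_cancel_right]

lemma mdeg_qmon (c : ℕ) : mdeg (qmon c) = 2 := by
  rw [qmon, mdeg_add, mdeg_single, mdeg_single]

lemma qmon_mem_support (c : ℕ) (p1 : ℕ) (h1c : p1 = 1 ∨ p1 = c) :
    (p1, (0 : ℕ)) ∈ (qmon c).support := by
  rw [Finsupp.mem_support_iff, qmon_apply]
  rcases h1c with h | h <;> subst h <;> split_ifs <;> first | omega | simp_all

lemma quad_term_zero (k : ℕ) (n : ℤ) (c : ℕ) (hc : 1 ≤ c) (p1 p2 : ℕ)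
    (hne1 : ¬ (p1 = 1 ∧ p2 = 0 ∧ (c : ℤ) + 3 = (k : ℤ) - n + 1))
    (hnec : ¬ (p1 = c ∧ p2 = 0 ∧ (c : ℤ) + 3 = (k : ℤ) - n + 1)) :
    zchoose (-(p1 : ℤ)) p2 •
      coeff (qmon c) (fv p1 0 * (⇑Dx)^[p2] (Lpow k (n + p2 + p1))) = 0 := by
  classical
  by_cases hmem : (p1, (0 : ℕ)) ∈ (qmon c).support
  · have hp1c : p1 = 1 ∨ p1 = c := by
      rw [Finsupp.mem_support_iff, qmon_apply] at hmem
      split_ifs at hmem with h1 h2 h2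
      · exact Or.inl (congrArg Prod.fst h1).symm
      · exact Or.inl (congrArg Prod.fst h1).symm
      · exact Or.inr (congrArg Prod.fst h2).symm
      · exact absurd rfl hmem
    by_cases hp11 : p1 = 1
    · subst hp11
      rw [fv, coeff_X_mul', if_pos hmem, qmon_sub_one]
      cases p2 with
      | zero =>
        rw [Function.iterate_zero_apply, Lpow_lin k _ c 0 hc]
        split_ifs with h'
        · exact absurd ⟨rfl, rfl, by push_cast at h' ⊢; omega⟩ hne1
        · rw [smul_zero]
      | succ p2' =>
        rw [coeff_Dx_iter_zero_snd ?_ _ (Nat.succ_le_succ (Nat.zero_le _)), smul_zero]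
        intro u hu
        rw [single_support, Finset.mem_singleton] at hu
        rw [hu]
    · have hp1cc : p1 = c := by rcases hp1c with h | h; exact absurd h hp11; exact h
      subst hp1cc
      rw [fv, coeff_X_mul', if_pos hmem, qmon_sub_c]
      cases p2 with
      | zero =>
        rw [Function.iterate_zero_apply, Lpow_lin k _ 1 0 (le_refl 1)]
        split_ifs with h'
        · exact absurd ⟨rfl, rfl, by push_cast at h' ⊢; omega⟩ hnec
        · rw [smul_zero]
      | succ p2' =>
        rw [coeff_Dx_iter_zero_snd ?_ _ (Nat.succ_le_succ (Nat.zero_le _)), smul_zero]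
        intro u hu
        rw [single_support, Finset.mem_singleton] at hu
        rw [hu]
  · rw [fv, coeff_X_mul', if_neg hmem, smul_zero]

lemma quad_term_eval (k : ℕ) (n : ℤ) (c : ℕ) (hc : 1 ≤ c) (p1 : ℕ)
    (h1c : p1 = 1 ∨ p1 = c)
    (hcond : (c : ℤ) + 3 = (k : ℤ) - n + 1) :
    zchoose (-(p1 : ℤ)) 0 •
      coeff (qmon c) (fv p1 0 * (⇑Dx)^[0] (Lpow k (n + ((0 : ℕ) : ℤ) + p1))) = (k : ℂ) := by
  classical
  have hmem := qmon_mem_support c p1 h1c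
  rw [fv, coeff_X_mul', if_pos hmem, Function.iterate_zero_apply]
  by_cases hp11 : p1 = 1
  · subst hp11
    rw [qmon_sub_one, Lpow_lin k _ c 0 hc, zchoose_zero', one_smul, Nat.choose_one_right]
    split_ifs with h'
    · rfl
    · exact absurd (by push_cast; omega) h'
  · have hp1cc : p1 = c := by rcases h1c with h | h; exact absurd h hp11; exact h
    subst hp1cc
    rw [qmon_sub_c, Lpow_lin k _ 1 0 (le_refl 1), zchoose_zero', one_smul, Nat.choose_one_right]
    split_ifs with h'
    · rfl
    · exact absurd (by push_cast; omega) h'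

lemma Lpow_quad : ∀ k : ℕ, ∀ n : ℤ, ∀ c : ℕ, 1 ≤ c →
    coeff (qmon c) (Lpow k n) =
      if (c : ℤ) + 3 = (k : ℤ) - n then
        (if c = 1 then ((k : ℂ) * ((k : ℂ) - 1)) / 2 else (k : ℂ) * ((k : ℂ) - 1))
      else 0 := by
  intro k
  induction k with
  | zero =>
    intro n c hc
    rw [Lpow_zero_eval, coeff_single_of_const _ ?_ n]
    · split_ifs <;> norm_num
    · intro h
      have := DFunLike.congr_fun h (1, 0)
      rw [qmon_apply] at this
      simp at this
  | succ k ih =>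
    intro n c hc
    rw [coeff_Lpow_succ, ih _ _ hc, coeff_Dx_zero_snd (qmon_support_snd c) _]
    have hC : ∑ p ∈ Sset k n,
        zchoose (-(p.1 : ℤ)) p.2 •
          coeff (qmon c) (fv p.1 0 * (⇑Dx)^[p.2] (Lpow k (n + p.2 + p.1))) =
        if (c : ℤ) + 3 = (k : ℤ) - n + 1 then (if c = 1 then (k : ℂ) else 2 * k) else 0 := by
      by_cases hcond : (c : ℤ) + 3 = (k : ℤ) - n + 1
      · rw [if_pos hcond]
        by_cases hc1 : c = 1
        · subst hc1
          rw [if_pos rfl]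
          have hmem : ((1 : ℕ), (0 : ℕ)) ∈ Sset k n := by
            rw [Sset, Finset.mem_product, Finset.mem_Icc, Finset.mem_range]
            refine ⟨⟨le_refl 1, ?_⟩, ?_⟩ <;> dsimp only <;> omega
          rw [Finset.sum_eq_single_of_mem _ hmem]
          · exact quad_term_eval k n 1 (le_refl 1) 1 (Or.inl rfl) hcond
          · intro p hp hne
            obtain ⟨p1, p2⟩ := p
            dsimp only
            refine quad_term_zero k n 1 (le_refl 1) p1 p2 ?_ ?_ <;>
              · rintro ⟨h1, h2, -⟩
                exact hne (by rw [h1, h2])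
        · rw [if_neg hc1]
          have hsub : ({((1 : ℕ), (0 : ℕ)), ((c : ℕ), (0 : ℕ))} : Finset (ℕ × ℕ)) ⊆ Sset k n := by
            intro q hq
            rw [Finset.mem_insert, Finset.mem_singleton] at hq
            rw [Sset, Finset.mem_product, Finset.mem_Icc, Finset.mem_range]
            rcases hq with h | h <;> subst h <;>
              refine ⟨⟨?_, ?_⟩, ?_⟩ <;> dsimp only <;> omega
          rw [← Finset.sum_subset hsub]
          · rw [Finset.sum_pair (by intro h; exact hc1 (congrArg Prod.fst h).symm)]
            have e1 := quad_term_eval k n c hc 1 (Or.inl rfl) hcond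
            have e2 := quad_term_eval k n c hc c (Or.inr rfl) hcond
            dsimp only at e1 e2 ⊢
            rw [e1, e2]
            ring
          · intro p hp hnp
            obtain ⟨p1, p2⟩ := p
            rw [Finset.mem_insert, Finset.mem_singleton] at hnp
            dsimp only
            refine quad_term_zero k n c hc p1 p2 ?_ ?_
            · rintro ⟨h1, h2, -⟩
              exact hnp (Or.inl (by rw [h1, h2]))
            · rintro ⟨h1, h2, -⟩
              exact hnp (Or.inr (by rw [h1, h2]))
      · rw [if_neg hcond]
        refine Finset.sum_eq_zero ?_
        intro p hp
        obtain ⟨p1, p2⟩ := p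
        dsimp only
        refine quad_term_zero k n c hc p1 p2 ?_ ?_ <;>
          · rintro ⟨-, -, h⟩
            exact hcond h
    rw [hC]
    split_ifs <;>
      first
        | (exfalso; omega)
        | ring1
        | (push_cast; ring1)

end KPaux6
section KPaux7
open MvPolynomial

lemma Wm_eq_sum (m : (ℕ × ℕ) →₀ ℕ) :
    Wm m = ∑ u ∈ m.support, m u * (u.1 + u.2 + 1) := rfl

lemma mdeg_eq_sum' (m : (ℕ × ℕ) →₀ ℕ) : mdeg m = ∑ u ∈ m.support, m u := rfl

lemma mdeg_zero : mdeg (0 : (ℕ × ℕ) →₀ ℕ) = 0 := by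
  rw [mdeg_eq_sum']; simp

lemma mdeg_le_one_struct (m : (ℕ × ℕ) →₀ ℕ) (h : mdeg m ≤ 1) :
    m = 0 ∨ ∃ v, m = Finsupp.single v 1 := by
  classical
  by_cases hm : m = 0
  · exact Or.inl hm
  · right
    obtain ⟨v, hv⟩ := Finsupp.support_nonempty_iff.mpr hm
    refine ⟨v, ?_⟩
    have hmv : 1 ≤ m v := Nat.one_le_iff_ne_zero.mpr (Finsupp.mem_support_iff.mp hv)
    have hsplit : mdeg m = m v + ∑ u ∈ m.support.erase v, m u :=
      (Finset.add_sum_erase _ _ hv).symm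
    have herase : m.support.erase v = ∅ := by
      by_contra hne
      obtain ⟨u, hu⟩ := Finset.nonempty_iff_ne_empty.mpr hne
      have h1 : 1 ≤ m u := Nat.one_le_iff_ne_zero.mpr
        (Finsupp.mem_support_iff.mp (Finset.mem_of_mem_erase hu))
      have h2 : m u ≤ ∑ u' ∈ m.support.erase v, m u' :=
        Finset.single_le_sum (fun _ _ => Nat.zero_le _) hu
      omega
    have hsupp : m.support = {v} := by
      rw [← Finset.insert_erase hv, herase]
      simp
    obtain ⟨-, hm2⟩ := Finsupp.support_eq_singleton.mp hsupp
    have hmv1 : m v = 1 := by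
      rw [hsplit, herase] at h
      simpa using by omega
    rw [hm2, hmv1]

lemma classify (k : ℕ) (hk : 3 ≤ k) (m : (ℕ × ℕ) →₀ ℕ) (hW : Wm m = k + 1)
    (hvars : ∀ v ∈ m.support, 1 ≤ v.1) (hdeg : 2 ≤ mdeg m)
    (v : ℕ × ℕ) (hv : v ∈ m.support) (hv1 : k - 2 ≤ v.1) :
    m = qmon (k - 2) := by
  classical
  have hmv : 1 ≤ m v := Nat.one_le_iff_ne_zero.mpr (Finsupp.mem_support_iff.mp hv)
  have hWsplit : Wm m = m v * (v.1 + v.2 + 1) +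
      ∑ u ∈ m.support.erase v, m u * (u.1 + u.2 + 1) := by
    rw [Wm_eq_sum]
    exact (Finset.add_sum_erase _ _ hv).symm
  have hdsplit : mdeg m = m v + ∑ u ∈ m.support.erase v, m u := by
    rw [mdeg_eq_sum']
    exact (Finset.add_sum_erase _ _ hv).symm
  have hWrest : 2 * (∑ u ∈ m.support.erase v, m u) ≤
      ∑ u ∈ m.support.erase v, m u * (u.1 + u.2 + 1) := by
    rw [Finset.mul_sum]
    refine Finset.sum_le_sum ?_
    intro u hu
    have hu1 : 1 ≤ u.1 := hvars u (Finset.mem_of_mem_erase hu)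
    calc 2 * m u = m u * 2 := by ring
    _ ≤ m u * (u.1 + u.2 + 1) := Nat.mul_le_mul_left _ (by omega)
  have hv1' : 1 ≤ v.1 := hvars v hv
  have hwv : k - 1 ≤ v.1 + v.2 + 1 := by omega
  by_cases hcase : 2 ≤ m v
  · have hmul : 2 * (k - 1) ≤ m v * (v.1 + v.2 + 1) := Nat.mul_le_mul hcase hwv
    have hk3 : k = 3 := by omega
    have hD0 : ∑ u ∈ m.support.erase v, m u = 0 := by omega
    have herase : m.support.erase v = ∅ := by
      by_contra hne
      obtain ⟨u, hu⟩ := Finset.nonempty_iff_ne_empty.mpr hne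
      have h1 : 1 ≤ m u := Nat.one_le_iff_ne_zero.mpr
        (Finsupp.mem_support_iff.mp (Finset.mem_of_mem_erase hu))
      have h2 : m u ≤ ∑ u' ∈ m.support.erase v, m u' :=
        Finset.single_le_sum (fun _ _ => Nat.zero_le _) hu
      omega
    have hsupp : m.support = {v} := by
      rw [← Finset.insert_erase hv, herase]
      simp
    obtain ⟨-, hm2⟩ := Finsupp.support_eq_singleton.mp hsupp
    have hprod : m v * (v.1 + v.2 + 1) = 4 := by
      rw [hWsplit, herase] at hW
      simp only [Finset.sum_empty, add_zero] at hW
      omega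
    have hmv2 : m v = 2 := by
      rcases Nat.lt_or_ge (m v) 3 with h | h
      · omega
      · exfalso
        have : 3 * 2 ≤ m v * (v.1 + v.2 + 1) := Nat.mul_le_mul h (by omega)
        omega
    have hwv2 : v.1 + v.2 + 1 = 2 := by rw [hmv2] at hprod; omega
    have hveq : v = (1, 0) := by
      rw [Prod.ext_iff]
      constructor <;> omega
    rw [hm2, hmv2, hveq, hk3]
    show Finsupp.single (1, 0) 2 = qmon 1
    rw [qmon, ← Finsupp.single_add]
  · have hmv1 : m v = 1 := by omega
    have hD1 : ∑ u ∈ m.support.erase v, m u = 1 := by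
      rw [hmv1, one_mul] at hWsplit
      omega
    have hne : (m.support.erase v).Nonempty := by
      by_contra hne
      rw [Finset.not_nonempty_iff_eq_empty] at hne
      rw [hne, Finset.sum_empty] at hD1
      omega
    have hcard : (m.support.erase v).card = 1 := by
      have h1 : (m.support.erase v).card ≤ ∑ u ∈ m.support.erase v, m u := by
        rw [Finset.card_eq_sum_ones]
        refine Finset.sum_le_sum ?_
        intro u hu
        exact Nat.one_le_iff_ne_zero.mpr
          (Finsupp.mem_support_iff.mp (Finset.mem_of_mem_erase hu))
      have h2 : 1 ≤ (m.support.erase v).card := Finset.card_pos.mpr hne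
      omega
    obtain ⟨u, hu⟩ := Finset.card_eq_one.mp hcard
    have huin : u ∈ m.support.erase v := by rw [hu]; exact Finset.mem_singleton_self u
    have hune : u ≠ v := (Finset.mem_erase.mp huin).1
    have humem : u ∈ m.support := (Finset.mem_erase.mp huin).2
    have hmu : m u = 1 := by
      rw [hu, Finset.sum_singleton] at hD1
      exact hD1
    have hR : ∑ u' ∈ m.support.erase v, m u' * (u'.1 + u'.2 + 1) = u.1 + u.2 + 1 := by
      rw [hu, Finset.sum_singleton, hmu, one_mul]
    have hu1 : 1 ≤ u.1 := hvars u humem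
    have hwu2 : u.1 + u.2 + 1 = 2 ∧ v.1 + v.2 + 1 = k - 1 := by
      rw [hmv1, one_mul, hR] at hWsplit
      omega
    have hueq : u = (1, 0) := by rw [Prod.ext_iff]; constructor <;> omega
    have hveq : v = (k - 2, 0) := by rw [Prod.ext_iff]; constructor <;> omega
    have hsupp : m.support = {v, u} := by
      rw [← Finset.insert_erase hv, hu]
    have hk4 : k - 2 ≠ 1 := by
      intro h
      exact hune (by rw [hueq, hveq, h])
    ext w
    rw [qmon_apply (k - 2)]
    by_cases hwv' : w = v
    · subst hwv'
      rw [hmv1, if_neg (by rw [hveq]; intro h; exact hk4 (congrArg Prod.fst h).symm),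
        if_pos hveq.symm]
    · by_cases hwu' : w = u
      · subst hwu'
        rw [hmu, if_pos hueq.symm,
          if_neg (by rw [hueq]; intro h; exact hk4 (congrArg Prod.fst h))]
      · have hw0 : m w = 0 := by
          rw [← Finsupp.notMem_support_iff, hsupp]
          intro h
          rcases Finset.mem_insert.mp h with h | h
          · exact hwv' h
          · exact hwu' (Finset.mem_singleton.mp h)
        rw [hw0, if_neg (by intro h; exact hwu' (by rw [← h, hueq])),
          if_neg (by intro h; exact hwv' (by rw [← h, hveq]))]

/-- the linear sum appearing in the theorem -/
noncomputable def LSum (k : ℕ) : DPRing :=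
  ∑ i ∈ Finset.range k, (k.choose (k - 1 - i) : ℂ) • fv (k - i) i

lemma coeff_LSum_mdeg_ne_one (k : ℕ) (m : (ℕ × ℕ) →₀ ℕ) (hm : mdeg m ≠ 1) :
    coeff m (LSum k) = 0 := by
  classical
  rw [LSum, coeff_sum]
  refine Finset.sum_eq_zero ?_
  intro i _
  rw [coeff_smul, fv, coeff_X', if_neg, smul_zero]
  intro h
  apply hm
  rw [← h, mdeg_single]

lemma coeff_LSum_single (k : ℕ) (a b : ℕ) :
    coeff (Finsupp.single (a, b) 1) (LSum k) =
      if 1 ≤ a ∧ a + b = k then (k.choose (k - 1 - b) : ℂ) else 0 := by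
  classical
  rw [LSum, coeff_sum]
  by_cases hab : 1 ≤ a ∧ a + b = k
  · rw [if_pos hab]
    have hbk : b ∈ Finset.range k := Finset.mem_range.mpr (by omega)
    rw [Finset.sum_eq_single_of_mem _ hbk]
    · rw [coeff_smul, fv, coeff_X',
        if_pos (by congr 1; rw [Prod.ext_iff]; constructor <;> dsimp only <;> omega),
        smul_eq_mul, mul_one]
    · intro i hi hne
      rw [coeff_smul, fv, coeff_X', if_neg, smul_zero]
      intro h
      rcases Finsupp.single_eq_single_iff _ _ _ _ |>.mp h with ⟨h1, -⟩ | ⟨h1, -⟩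
      · exact hne (congrArg Prod.snd h1)
      · exact one_ne_zero h1
  · rw [if_neg hab]
    refine Finset.sum_eq_zero ?_
    intro i hi
    rw [Finset.mem_range] at hi
    rw [coeff_smul, fv, coeff_X', if_neg, smul_zero]
    intro h
    rcases Finsupp.single_eq_single_iff _ _ _ _ |>.mp h with ⟨h1, -⟩ | ⟨h1, -⟩
    · have h2 := congrArg Prod.fst h1
      have h3 := congrArg Prod.snd h1
      dsimp only at h2 h3
      exact hab ⟨by omega, by omega⟩
    · exact one_ne_zero h1

/-- for monomials of degree ≤ 1 the coefficients of `Lpow k (-1)` and `LSum k` agree -/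
lemma coeff_small_eq (k : ℕ) (hk : 1 ≤ k) (m : (ℕ × ℕ) →₀ ℕ) (hm : mdeg m ≤ 1) :
    coeff m (Lpow k (-1)) = coeff m (LSum k) := by
  rcases mdeg_le_one_struct m hm with rfl | ⟨⟨a, b⟩, rfl⟩
  · rw [Lpow_const, if_neg (by omega), coeff_LSum_mdeg_ne_one k 0 (by rw [mdeg_zero]; omega)]
  · rw [coeff_LSum_single k a b]
    by_cases ha : 1 ≤ a
    · rw [Lpow_lin k (-1) a b ha]
      by_cases hab : a + b = k
      · rw [if_pos (by push_cast; omega), if_pos ⟨ha, hab⟩]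
        have h1 : k - 1 - b = k - (b + 1) := by omega
        rw [h1, Nat.choose_symm (by omega : b + 1 ≤ k)]
      · rw [if_neg (by push_cast; omega), if_neg (by rintro ⟨-, h⟩; exact hab h)]
    · obtain rfl : a = 0 := by omega
      rw [Lpow_lin0 k (-1) b, if_neg (by rintro ⟨h, -⟩; omega)]

lemma coeff_qprod (k : ℕ) (m : (ℕ × ℕ) →₀ ℕ) :
    coeff m (fv 1 0 * fv (k - 2) 0) = if qmon (k - 2) = m then 1 else 0 := by
  classical
  have h1 : (fv 1 0 : DPRing) * fv (k - 2) 0 = monomial (qmon (k - 2)) 1 := by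
    rw [fv, fv, MvPolynomial.X, MvPolynomial.X, monomial_mul, one_mul, qmon]
  rw [h1, coeff_monomial]

end KPaux7

open MvPolynomial in
/-- For `k ≥ 1` the linear part of `w_k := res L^k` is
`Σ_{i=0}^{k-1} (k choose k-1-i) f_{k-i}^{(i)}`, and for `k ≥ 3`, in addition, the
quadratic monomial `f₁ f_{k-2}` appears with coefficient `k(k-1)/(1+δ_{k,3})` and the
remaining quadratic-and-higher part only involves the variables `f_a^{(l)}` with
`a ≤ k-3`. -/
theorem res_Lpow_linear_and_quadratic_part :
    (∀ k : ℕ, 1 ≤ k → ∃ E : DPRing, (∀ m ∈ E.support, 2 ≤ mdeg m) ∧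
      Lpow k (-1) =
        (∑ i ∈ Finset.range k, (k.choose (k - 1 - i) : ℂ) • fv (k - i) i) + E) ∧
    (∀ k : ℕ, 3 ≤ k → ∃ T : DPRing, (∀ m ∈ T.support, 2 ≤ mdeg m) ∧
      T ∈ MvPolynomial.supported ℂ {p : ℕ × ℕ | p.1 ≤ k - 3} ∧
      Lpow k (-1) =
        (∑ i ∈ Finset.range k, (k.choose (k - 1 - i) : ℂ) • fv (k - i) i) +
          ((k * (k - 1) : ℂ) / (if k = 3 then 2 else 1)) • (fv 1 0 * fv (k - 2) 0) + T) := by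
  constructor
  · intro k hk
    refine ⟨Lpow k (-1) - LSum k, ?_, ?_⟩
    · intro m hm
      rw [MvPolynomial.mem_support_iff] at hm
      by_contra hdeg
      push_neg at hdeg
      exact hm (by rw [coeff_sub, coeff_small_eq k hk m (by omega), sub_self])
    · show Lpow k (-1) = LSum k + (Lpow k (-1) - LSum k)
      ring
  · intro k hk
    have hq : coeff (qmon (k - 2)) (Lpow k (-1)) =
        ((k : ℂ) * ((k : ℂ) - 1)) / (if k = 3 then 2 else 1) := by
      rw [Lpow_quad k (-1) (k - 2) (by omega), if_pos (by omega)]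
      by_cases h3 : k = 3
      · rw [if_pos (by omega : k - 2 = 1), if_pos h3]
      · rw [if_neg (by omega : ¬ k - 2 = 1), if_neg h3, div_one]
    refine ⟨Lpow k (-1) - LSum k -
      ((k * (k - 1) : ℂ) / (if k = 3 then 2 else 1)) • (fv 1 0 * fv (k - 2) 0), ?_, ?_, ?_⟩
    · intro m hm
      rw [MvPolynomial.mem_support_iff] at hm
      by_contra hdeg
      push_neg at hdeg
      apply hm
      rw [coeff_sub, coeff_sub, coeff_smul, coeff_qprod,
        if_neg (show ¬(qmon (k - 2) = m) from fun h => by rw [← h, mdeg_qmon] at hdeg; omega),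
        coeff_small_eq k (by omega) m (by omega), smul_zero, sub_zero, sub_self]
    · rw [MvPolynomial.mem_supported]
      intro v hv
      rw [Finset.mem_coe, MvPolynomial.mem_vars] at hv
      obtain ⟨m, hm, hvm⟩ := hv
      show v.1 ≤ k - 3
      by_contra hbig
      have hv1 : k - 2 ≤ v.1 := by omega
      rw [MvPolynomial.mem_support_iff] at hm
      by_cases hqm : qmon (k - 2) = m
      · apply hm
        rw [coeff_sub, coeff_sub, coeff_smul, coeff_qprod, if_pos (show qmon (k - 2) = m from hqm), ← hqm, hq,
          coeff_LSum_mdeg_ne_one k (qmon (k - 2)) (by rw [mdeg_qmon]; omega)]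
        simp
      · by_cases hdeg : 2 ≤ mdeg m
        · have hL : coeff m (Lpow k (-1)) ≠ 0 := by
            intro h0
            apply hm
            rw [coeff_sub, coeff_sub, coeff_smul, coeff_qprod, if_neg (show ¬(qmon (k - 2) = m) from hqm), h0,
              coeff_LSum_mdeg_ne_one k m (by omega), smul_zero, sub_zero, sub_zero]
          obtain ⟨hW, hvars⟩ := Lpow_good k (-1) m hL
          have hWn : Wm m = k + 1 := by omega
          exact hqm ((classify k hk m hWn hvars hdeg v hvm hv1).symm)
        · apply hm
          push_neg at hdeg
          rw [coeff_sub, coeff_sub, coeff_smul, coeff_qprod, if_neg (show ¬(qmon (k - 2) = m) from hqm),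
            coeff_small_eq k (by omega) m (by omega), smul_zero, sub_zero, sub_self]
    · show Lpow k (-1) = LSum k +
        ((k * (k - 1) : ℂ) / (if k = 3 then 2 else 1)) • (fv 1 0 * fv (k - 2) 0) +
        (Lpow k (-1) - LSum k -
          ((k * (k - 1) : ℂ) / (if k = 3 then 2 else 1)) • (fv 1 0 * fv (k - 2) 0))
      ring
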